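/- A sofic shift is minimal if and only if it is periodic. -/

import Mathlib

/-- The shift map on biinfinite sequences. -/
def shiftMap (X : Type*) : (ℤ → X) → (ℤ → X) := fun x i => x (i + 1)

/-- A subshift: a non-empty, closed, shift-invariant subset of `X^ℤ`. -/
def IsSubshift {X : Type*} [TopologicalSpace X] (𝒳 : Set (ℤ → X)) : Prop :=
  𝒳.Nonempty ∧ IsClosed 𝒳 ∧ shiftMap X '' 𝒳 = 𝒳

/-- The finite word `x_i x_{i+1} ⋯ x_{i+n-1}` read in the point `x`. -/
def wordAt {X : Type*} (x : ℤ → X) (i : ℤ) (n : ℕ) : List X :=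
  (List.range n).map fun k => x (i + k)

/-- The language of a subshift: the set of (non-empty) finite factors of its points. -/
def shiftLang {X : Type*} (𝒳 : Set (ℤ → X)) : Set (List X) :=
  {w | w ≠ [] ∧ ∃ x ∈ 𝒳, ∃ i : ℤ, w = wordAt x i w.length}

/-- The (two-sided) orbit of a point under the shift. -/
def shiftOrbit {X : Type*} (x : ℤ → X) : Set (ℤ → X) :=
  {y | ∃ k : ℤ, y = fun i => x (i + k)}

/-- A periodic shift: the orbit of the biinfinite repetition `⋯uuu.uuu⋯` of a
non-empty word `u`. -/
def IsPeriodicShift {X : Type*} (𝒳 : Set (ℤ → X)) : Prop :=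
  ∃ u : List X, u ≠ [] ∧ ∃ x : ℤ → X,
    (∀ i : ℤ, x (i + u.length) = x i) ∧ wordAt x 0 u.length = u ∧ 𝒳 = shiftOrbit x

/-! ### Auxiliary lemmas -/

lemma wordAt_eq {X : Type*} (x : ℤ → X) (i : ℤ) (n : ℕ) :
    wordAt x i n = (List.range n).map (fun k : ℕ => x (i + (k:ℤ))) := by
  rw [wordAt]
  rw [show ((List.range n : List ℕ) : List ℤ) = (List.range n).map (fun k : ℕ => (k:ℤ)) from
    List.flatMap_pure_eq_map _ _]
  rw [List.map_map]; rfl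

lemma wordAt_length {X : Type*} (x : ℤ → X) (i : ℤ) (n : ℕ) :
    (wordAt x i n).length = n := by
  rw [wordAt_eq, List.length_map, List.length_range]

lemma wordAt_getElem {X : Type*} (x : ℤ → X) (i : ℤ) (n : ℕ) (j : ℕ) (hj : j < n) :
    (wordAt x i n)[j]'(by rw [wordAt_length]; exact hj) = x (i + j) := by
  simp [wordAt_eq]

lemma wordAt_add {X : Type*} (x : ℤ → X) (i : ℤ) (n m : ℕ) :
    wordAt x i (n + m) = wordAt x i n ++ wordAt x (i + n) m := by
  apply List.ext_getElem
  · simp [wordAt_length]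
  · intro j h1 h2
    rw [wordAt_length] at h1
    rw [wordAt_getElem _ _ _ _ h1]
    by_cases hj : j < n
    · rw [List.getElem_append_left (by rw [wordAt_length]; exact hj),
        wordAt_getElem _ _ _ _ hj]
    · rw [List.getElem_append_right (by rw [wordAt_length]; omega)]
      simp only [wordAt_length]
      rw [wordAt_getElem _ _ _ _ (by omega)]
      congr 1
      omega

lemma wordAt_congr {X : Type*} {x y : ℤ → X} {i i' : ℤ} {n : ℕ}
    (h : wordAt x i n = wordAt y i' n) : ∀ j : ℕ, j < n → x (i + j) = y (i' + j) := by
  intro j hj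
  have h1 := List.getElem_of_eq h (by rw [wordAt_length]; exact hj)
  rwa [wordAt_getElem _ _ _ _ hj, wordAt_getElem _ _ _ _ hj] at h1

lemma shift_mem {X : Type*} {𝒳 : Set (ℤ → X)} (h : shiftMap X '' 𝒳 = 𝒳) (k : ℤ) :
    ∀ x ∈ 𝒳, (fun i => x (i + k)) ∈ 𝒳 := by
  induction k using Int.induction_on with
  | zero => intro x hx; simpa using hx
  | succ k ih =>
    intro x hx
    have h2 : shiftMap X (fun i => x (i + k)) ∈ 𝒳 := h ▸ Set.mem_image_of_mem _ (ih x hx)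
    convert h2 using 1
    funext i
    show x (i + (k + 1)) = x (i + 1 + k)
    congr 1; ring
  | pred k ih =>
    intro x hx
    have hx' : x ∈ shiftMap X '' 𝒳 := h.symm ▸ hx
    obtain ⟨w, hw, hwx⟩ := hx'
    have h2 := ih w hw
    convert h2 using 1
    funext i
    have h3 : w (i + -(k:ℤ)) = shiftMap X w (i + (-(k:ℤ) - 1)) := by
      show _ = w (i + (-(k:ℤ) - 1) + 1)
      congr 1; ring
    rw [h3, hwx]

lemma factor_mem {X : Type*} {𝒳 : Set (ℤ → X)} {a v c : List X}
    (h : a ++ v ++ c ∈ shiftLang 𝒳) (hv : v ≠ []) : v ∈ shiftLang 𝒳 := by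
  obtain ⟨hne, x, hx, i, hw⟩ := h
  refine ⟨hv, x, hx, i + a.length, ?_⟩
  have hl : (a ++ v ++ c).length = a.length + (v.length + c.length) := by
    rw [List.length_append, List.length_append, Nat.add_assoc]
  rw [hl, wordAt_add, wordAt_add, List.append_assoc] at hw
  have h1 := (List.append_inj hw (by rw [wordAt_length])).2
  exact (List.append_inj h1 (by rw [wordAt_length])).1

/-- The biinfinite periodic repetition of a nonempty word `b`. -/
def perPoint {X : Type*} (b : List X) (hb : b ≠ []) : ℤ → X :=
  fun i => b.get ⟨(i % (b.length : ℤ)).toNat, by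
    have h1 : (0:ℤ) < (b.length : ℤ) := by exact_mod_cast List.length_pos_iff.2 hb
    have h2 := Int.emod_nonneg i h1.ne'
    have h3 := Int.emod_lt_of_pos i h1
    omega⟩

lemma perPoint_shift {X : Type*} (b : List X) (hb : b ≠ []) (i k : ℤ) :
    perPoint b hb (i + (b.length : ℤ) * k) = perPoint b hb i := by
  have h : (i + (b.length:ℤ) * k) % (b.length:ℤ) = i % (b.length:ℤ) :=
    Int.add_mul_emod_self_left i (b.length:ℤ) k
  simp only [perPoint, h]

lemma perPoint_period {X : Type*} (b : List X) (hb : b ≠ []) (i : ℤ) :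
    perPoint b hb (i + (b.length : ℤ)) = perPoint b hb i := by
  have := perPoint_shift b hb i 1
  rwa [mul_one] at this

lemma perPoint_nat {X : Type*} (b : List X) (hb : b ≠ []) (j : ℕ) (hj : j < b.length) :
    perPoint b hb (j : ℤ) = b[j] := by
  have h1 : ((j:ℤ) % (b.length:ℤ)) = (j:ℤ) :=
    Int.emod_eq_of_lt (by positivity) (by exact_mod_cast hj)
  simp only [perPoint, h1, Int.toNat_natCast]
  rfl

lemma wordAt_perPoint {X : Type*} (b : List X) (hb : b ≠ []) :
    wordAt (perPoint b hb) 0 b.length = b := by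
  apply List.ext_getElem
  · rw [wordAt_length]
  · intro j h1 h2
    rw [wordAt_length] at h1
    rw [wordAt_getElem _ _ _ _ h1, zero_add, perPoint_nat b hb j h1]

lemma wordAt_perPoint_shift {X : Type*} (b : List X) (hb : b ≠ []) (i : ℤ) (n : ℕ) :
    wordAt (perPoint b hb) (i + (b.length : ℤ)) n = wordAt (perPoint b hb) i n := by
  rw [wordAt_eq, wordAt_eq]
  apply List.map_congr_left
  intro j _
  have h : i + (b.length:ℤ) + (j:ℤ) = (i + (j:ℤ)) + (b.length:ℤ) := by ring
  rw [h, perPoint_period]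

lemma wordAt_perPoint_rep {X : Type*} (b : List X) (hb : b ≠ []) (k : ℕ) :
    wordAt (perPoint b hb) 0 (k * b.length) = (List.replicate k b).flatten := by
  induction k with
  | zero => simp [wordAt_eq]
  | succ k ih =>
    have h : (k + 1) * b.length = b.length + k * b.length := by ring
    rw [h, wordAt_add, wordAt_perPoint_shift b hb 0 (k * b.length), wordAt_perPoint,
      List.replicate_succ, List.flatten_cons, ih]

/-- A sofic shift is minimal (contains no proper subshift) if and only if it is periodic. -/
theorem sofic_minimal_iff_periodic {X : Type*} [Fintype X] [TopologicalSpace X]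
    [DiscreteTopology X] (𝒳 : Set (ℤ → X)) (h𝒳 : IsSubshift 𝒳)
    (hsofic : Language.IsRegular (shiftLang 𝒳)) :
    (∀ 𝒴 : Set (ℤ → X), IsSubshift 𝒴 → 𝒴 ⊆ 𝒳 → 𝒴 = 𝒳) ↔ IsPeriodicShift 𝒳 := by
  obtain ⟨hne, hcl, hinv⟩ := h𝒳
  constructor
  · -- minimal → periodic
    intro hmin
    obtain ⟨σ, hσ, M, hM⟩ := hsofic
    obtain ⟨x0, hx0⟩ := hne
    set N := Fintype.card σ with hN
    have hw0 : wordAt x0 0 (N+1) ∈ shiftLang 𝒳 := by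
      refine ⟨?_, x0, hx0, 0, by rw [wordAt_length]⟩
      intro h
      have := wordAt_length x0 0 (N+1)
      rw [h] at this
      simp at this
    have hw0' : wordAt x0 0 (N+1) ∈ M.accepts := by rw [hM]; exact hw0
    obtain ⟨a, b, c, hsplit, hab, hb, hsub⟩ :=
      M.pumping_lemma hw0' (by rw [wordAt_length]; omega)
    have hp : 0 < b.length := List.length_pos_iff.2 hb
    set p := b.length with hpdef
    set z := perPoint b hb with hzdef
    -- lengths of repeated words
    have hlen : ∀ k : ℕ, (List.replicate k b).flatten.length = k * p := by
      intro k
      rw [← wordAt_perPoint_rep b hb k, wordAt_length]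
    -- repeated words are in the language
    have hbk : ∀ k : ℕ, 0 < k → (List.replicate k b).flatten ∈ shiftLang 𝒳 := by
      intro k hk
      have hne' : (List.replicate k b).flatten ≠ [] := by
        intro h
        have := hlen k
        rw [h] at this
        simp at this
        omega
      have hmem : a ++ (List.replicate k b).flatten ++ c ∈ M.accepts := by
        apply hsub
        refine Language.mem_mul.2 ⟨a ++ (List.replicate k b).flatten,
          Language.mem_mul.2 ⟨a, rfl, (List.replicate k b).flatten, ?_, rfl⟩, c, rfl, rfl⟩
        exact Language.join_mem_kstar (fun y hy => by rw [List.eq_of_mem_replicate hy]; rfl)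
      rw [hM] at hmem
      exact factor_mem hmem hne'
    -- the periodic point is approximated by points of 𝒳
    have key : ∀ n : ℕ, ∃ y ∈ 𝒳, ∀ m : ℤ, -(n:ℤ) ≤ m → m ≤ (n:ℤ) → y m = z m := by
      intro n
      obtain ⟨-, x, hx, i, hw⟩ := hbk (2*n+1) (by omega)
      rw [hlen (2*n+1)] at hw
      have hagree := wordAt_congr ((wordAt_perPoint_rep b hb (2*n+1)).trans hw)
      refine ⟨fun m => x (m + (i + (p:ℤ) * n)), shift_mem hinv _ x hx, ?_⟩
      intro m hm1 hm2
      have hn_le : (n:ℤ) ≤ (p:ℤ) * n := by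
        have : (1:ℤ) ≤ (p:ℤ) := by exact_mod_cast hp
        nlinarith
      have hlb : 0 ≤ m + (p:ℤ) * n := by linarith
      have hub : m + (p:ℤ) * n < ((2*n+1 : ℕ) * p : ℕ) := by
        push_cast
        nlinarith
      set j := (m + (p:ℤ) * n).toNat with hjdef
      have hj1 : (j:ℤ) = m + (p:ℤ) * n := Int.toNat_of_nonneg hlb
      have hj2 : j < (2*n+1) * p := by
        have : (j:ℤ) < ((2*n+1) * p : ℕ) := by rw [hj1]; exact_mod_cast hub
        exact_mod_cast this
      have h4 := hagree j hj2
      calc x (m + (i + (p:ℤ) * n)) = x (i + (j:ℤ)) := by congr 1; omega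
        _ = z (0 + (j:ℤ)) := h4.symm
        _ = z (m + (p:ℤ) * n) := by rw [zero_add, hj1]
        _ = z m := perPoint_shift b hb m n
    choose y hy1 hy2 using key
    -- the periodic point belongs to 𝒳, by closedness
    have hzmem : z ∈ 𝒳 := by
      have ht : Filter.Tendsto y Filter.atTop (nhds z) := by
        rw [tendsto_pi_nhds]
        intro m
        apply tendsto_nhds_of_eventually_eq
        filter_upwards [Filter.eventually_ge_atTop m.natAbs] with n hn
        exact hy2 n m (by omega) (by omega)
      exact hcl.mem_of_tendsto ht (Filter.Eventually.of_forall hy1)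
    -- the orbit of z is a subshift
    have horb : IsSubshift (shiftOrbit z) := by
      refine ⟨⟨z, 0, by funext i; simp⟩, ?_, ?_⟩
      · -- closed since finite
        have hfin : (shiftOrbit z).Finite := by
          apply Set.Finite.subset (Set.finite_range (fun r : Fin p => fun i => z (i + (r:ℤ))))
          rintro w ⟨k, rfl⟩
          have h1 : (0:ℤ) < (p:ℤ) := by exact_mod_cast hp
          have h2 := Int.emod_nonneg k h1.ne'
          have h3 := Int.emod_lt_of_pos k h1
          refine ⟨⟨(k % (p:ℤ)).toNat, by omega⟩, ?_⟩
          funext i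
          show z (i + (((k % (p:ℤ)).toNat : ℕ) : ℤ)) = z (i + k)
          rw [Int.toNat_of_nonneg h2]
          have h5 : i + k = (i + k % (p:ℤ)) + (p:ℤ) * (k / (p:ℤ)) := by
            have := Int.mul_ediv_add_emod k (p:ℤ)
            linarith
          rw [h5]
          exact (perPoint_shift b hb (i + k % (p:ℤ)) (k / (p:ℤ))).symm
        exact hfin.isClosed
      · ext w
        constructor
        · rintro ⟨v, ⟨k, rfl⟩, rfl⟩
          refine ⟨k + 1, ?_⟩
          funext i
          show z (i + 1 + k) = z (i + (k + 1))
          congr 1; ring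
        · rintro ⟨k, rfl⟩
          refine ⟨fun i => z (i + (k - 1)), ⟨k - 1, rfl⟩, ?_⟩
          funext i
          show z (i + 1 + (k - 1)) = z (i + k)
          congr 1; ring
    have hsubset : shiftOrbit z ⊆ 𝒳 := by
      rintro w ⟨k, rfl⟩
      exact shift_mem hinv k z hzmem
    have heq := hmin _ horb hsubset
    exact ⟨b, hb, z, fun i => perPoint_period b hb i, wordAt_perPoint b hb, heq.symm⟩
  · -- periodic → minimal
    rintro ⟨u, hu, z, hper, hword, hXeq⟩ 𝒴 h𝒴 hsub
    obtain ⟨⟨y0, hy0⟩, -, hinvY⟩ := h𝒴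
    have hy0' : y0 ∈ shiftOrbit z := hXeq ▸ hsub hy0
    obtain ⟨k, hk⟩ := hy0'
    apply Set.Subset.antisymm hsub
    rw [hXeq]
    rintro w ⟨m, rfl⟩
    have hmem := shift_mem hinvY (m - k) y0 hy0
    convert hmem using 1
    funext i
    rw [hk]
    show z (i + m) = z (i + (m - k) + k)
    congr 1; ring
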